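/- Along solutions of the matrix flow P' = [P,Ψ] + [Ξ,Q] + 2[Ψ,Ξ], Ξ' = [Ξ,Ψ], the quantity tr(P Ξ^m) is conserved for every natural number m. -/

import Mathlib

open Matrix

attribute [local instance] Matrix.normedAddCommGroup Matrix.normedSpace

section aux

variable {N : ℕ}

local notation "M" => Matrix (Fin N) (Fin N) ℂ

/-- Matrix multiplication as a continuous bilinear map. -/
noncomputable def mulCLM : M →L[ℝ] M →L[ℝ] M :=
  LinearMap.toContinuousLinearMap
    ((LinearMap.toContinuousLinearMap (𝕜 := ℝ) (E := M) (F' := M)).toLinearMap.comp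
      (LinearMap.mul ℝ M))

@[simp] lemma mulCLM_apply (A B : M) : mulCLM A B = A * B := rfl

lemma HasDerivAt.matrix_mul {u v : ℝ → M} {u' v' : M} {t : ℝ}
    (hu : HasDerivAt u u' t) (hv : HasDerivAt v v' t) :
    HasDerivAt (fun s => u s * v s) (u t * v' + u' * v t) t := by
  have h := ((mulCLM.isBoundedBilinearMap (𝕜 := ℝ)).hasFDerivAt
    (u t, v t)).comp_hasDerivAt t (hu.prodMk hv)
  simp only [IsBoundedBilinearMap.deriv_apply] at h
  exact h

/-- Trace as a continuous linear map over ℝ. -/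
noncomputable def traceCLM : M →L[ℝ] ℂ :=
  LinearMap.toContinuousLinearMap (Matrix.traceLinearMap (Fin N) ℝ ℂ)

@[simp] lemma traceCLM_apply (A : M) : traceCLM A = A.trace := rfl

lemma trace_lie_mul_pow (A B : M) (m : ℕ) : ((⁅A, B⁆ : M) * A ^ m).trace = 0 := by
  simp only [Ring.lie_def, sub_mul, Matrix.trace_sub]
  rw [Matrix.mul_assoc A B, Matrix.trace_mul_comm A (B * A ^ m), Matrix.mul_assoc,
    Matrix.mul_assoc, ← pow_succ, ← pow_succ']
  simp

lemma trace_mul_lie_cancel (A B C : M) :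
    (A * ⁅B, C⁆).trace + ((⁅A, C⁆ : M) * B).trace = 0 := by
  simp only [Ring.lie_def, mul_sub, sub_mul, Matrix.trace_sub, ← Matrix.mul_assoc]
  rw [Matrix.trace_mul_cycle A B C]
  ring

end aux

/-- Along solutions of the matrix flow `P' = [P,Ψ] + [Ξ,Q] + 2[Ψ,Ξ]`,
`Ξ' = [Ξ,Ψ]` on `su(N)`, the quantity `tr(P Ξ^m)` is conserved for every
natural number `m`. -/
theorem stmt6 {N : ℕ}
    (Ψ P Q Ξ : ℝ → Matrix (Fin N) (Fin N) ℂ)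
    (hsu : ∀ t, (Ψ t)ᴴ = -Ψ t ∧ (P t)ᴴ = -P t ∧ (Q t)ᴴ = -Q t ∧ (Ξ t)ᴴ = -Ξ t)
    (htr : ∀ t, (Ψ t).trace = 0 ∧ (P t).trace = 0 ∧ (Q t).trace = 0 ∧
      (Ξ t).trace = 0)
    (hP : ∀ t, HasDerivAt P (⁅P t, Ψ t⁆ + ⁅Ξ t, Q t⁆ + 2 • ⁅Ψ t, Ξ t⁆) t)
    (hΞ : ∀ t, HasDerivAt Ξ ⁅Ξ t, Ψ t⁆ t) :
    ∀ (m : ℕ) (t : ℝ), (P t * Ξ t ^ m).trace = (P 0 * Ξ 0 ^ m).trace := by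
  intro m
  -- derivative of Ξ^m
  have hΞm : ∀ t, HasDerivAt (fun s => Ξ s ^ m) ⁅Ξ t ^ m, Ψ t⁆ t := by
    induction m with
    | zero =>
      intro t
      simp only [pow_zero, Ring.lie_def, one_mul, mul_one, sub_self]
      exact hasDerivAt_const t _
    | succ k ih =>
      intro t
      have h := (ih t).matrix_mul (hΞ t)
      have heq : Ξ t ^ k * ⁅Ξ t, Ψ t⁆ + ⁅Ξ t ^ k, Ψ t⁆ * Ξ t = ⁅Ξ t ^ (k + 1), Ψ t⁆ := by
        simp only [Ring.lie_def, pow_succ]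
        noncomm_ring
      simpa [pow_succ, heq] using h
  -- derivative of the trace is zero
  have hf : ∀ t, HasDerivAt (fun s => (P s * Ξ s ^ m).trace) 0 t := by
    intro t
    have h := ((hP t).matrix_mul (hΞm t))
    have h2 := (traceCLM.hasFDerivAt.comp_hasDerivAt t h)
    have e1 := trace_mul_lie_cancel (P t) (Ξ t ^ m) (Ψ t)
    have e2 := trace_lie_mul_pow (Ξ t) (Q t) m
    have e3 : ((⁅Ψ t, Ξ t⁆ : Matrix (Fin N) (Fin N) ℂ) * Ξ t ^ m).trace = 0 := by
      have h4 := trace_lie_mul_pow (Ξ t) (Ψ t) m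
      rw [show (⁅Ψ t, Ξ t⁆ : Matrix (Fin N) (Fin N) ℂ) = -⁅Ξ t, Ψ t⁆ from
        by simp only [Ring.lie_def]; abel, neg_mul, Matrix.trace_neg, h4, neg_zero]
    have hz :
        (P t * ⁅Ξ t ^ m, Ψ t⁆ +
          (⁅P t, Ψ t⁆ + ⁅Ξ t, Q t⁆ + 2 • ⁅Ψ t, Ξ t⁆) * Ξ t ^ m).trace = 0 := by
      simp only [add_mul, smul_mul_assoc, Matrix.trace_add, Matrix.trace_smul, e2, e3,
        smul_zero, add_zero]
      linear_combination e1
    have h3 := h2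
    simp only [Function.comp_def, traceCLM_apply] at h3
    exact h3.congr_deriv hz
  have hdiff : Differentiable ℝ (fun s => (P s * Ξ s ^ m).trace) :=
    fun t => (hf t).differentiableAt
  intro t
  exact is_const_of_deriv_eq_zero hdiff (fun x => (hf x).deriv) t 0
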